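/- Abstract form of Proposition A.4: Let X be a paracompact Hausdorff topological space and let σ : X → X be a continuous involution (σ ∘ σ = id) without fixed points. Then the quotient space X/∼, where x ∼ σ(x), equipped with the quotient topology, is paracompact. -/

import Mathlib

/-- Abstract form of Proposition A.4: the quotient of a paracompact Hausdorff space by a
fixed-point-free continuous involution is paracompact. -/
theorem paracompact_quotient_of_involution {X : Type*} [TopologicalSpace X] [T2Space X]
    [ParacompactSpace X] (σ : X → X) (hcont : Continuous σ) (hinv : σ ∘ σ = id)
    (hfix : ∀ x : X, σ x ≠ x) :
    ParacompactSpace (Quot fun x y : X => y = x ∨ y = σ x) := by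
  set r : X → X → Prop := fun x y => y = x ∨ y = σ x with hr
  have hσσ : ∀ x, σ (σ x) = x := fun x => congrFun hinv x
  have hequiv : Equivalence r := by
    constructor
    · intro x; exact Or.inl rfl
    · rintro x y (rfl | rfl)
      · exact Or.inl rfl
      · exact Or.inr (hσσ x).symm
    · rintro x y z (rfl | rfl) (rfl | rfl)
      · exact Or.inl rfl
      · exact Or.inr rfl
      · exact Or.inr rfl
      · exact Or.inl (hσσ x)
  set q : X → Quot r := Quot.mk r with hq
  have hqeq : ∀ a b : X, q a = q b ↔ r a b := by
    intro a b
    rw [hq, Quot.eq, Equivalence.eqvGen_iff hequiv]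
  -- preimage of image
  have hpre : ∀ V : Set X, q ⁻¹' (q '' V) = V ∪ σ ⁻¹' V := by
    intro V
    ext x
    simp only [Set.mem_preimage, Set.mem_image, Set.mem_union]
    constructor
    · rintro ⟨v, hv, hvq⟩
      rcases (hqeq v x).1 hvq with rfl | rfl
      · exact Or.inl hv
      · exact Or.inr (by simpa [hσσ] using hv)
    · rintro (hx | hx)
      · exact ⟨x, hx, rfl⟩
      · exact ⟨σ x, hx, (hqeq _ _).2 (Or.inr (hσσ x).symm)⟩
  have hopen : IsOpenMap q := by
    intro V hV
    rw [isOpen_coinduced (f := q), hpre]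
    exact hV.union (hV.preimage hcont)
  have hqcont : Continuous q := continuous_quot_mk
  constructor
  intro α s hso hscov
  obtain ⟨β, t, hto, htcov, htlf, htref⟩ :=
    ParacompactSpace.locallyFinite_refinement (X := X) α (fun a => q ⁻¹' (s a))
      (fun a => (hso a).preimage hqcont)
      (by rw [← Set.preimage_iUnion, hscov, Set.preimage_univ])
  refine ⟨β, fun b => q '' (t b), fun b => hopen _ (hto b), ?_, ?_, ?_⟩
  · apply Set.eq_univ_of_forall
    intro y
    obtain ⟨x, rfl⟩ := Quot.exists_rep y
    have hx : x ∈ ⋃ b, t b := htcov ▸ Set.mem_univ x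
    obtain ⟨b, hb⟩ := Set.mem_iUnion.1 hx
    exact Set.mem_iUnion.2 ⟨b, ⟨x, hb, rfl⟩⟩
  · intro y
    obtain ⟨x, rfl⟩ := Quot.exists_rep y
    obtain ⟨N, hN, hNfin⟩ := htlf x
    obtain ⟨M, hM, hMfin⟩ := htlf (σ x)
    refine ⟨q '' (N ∩ σ ⁻¹' M), hopen.image_mem_nhds
      (Filter.inter_mem hN (hcont.continuousAt.preimage_mem_nhds hM)), ?_⟩
    refine (hNfin.union hMfin).subset ?_
    rintro b ⟨w, ⟨v, hv, hvq⟩, ⟨u, ⟨huN, huM⟩, huq⟩⟩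
    rcases (hqeq v u).1 (hvq.trans huq.symm) with h | h
    · exact Or.inl ⟨v, hv, h ▸ huN⟩
    · refine Or.inr ⟨v, hv, ?_⟩
      rw [Set.mem_preimage, h, hσσ] at huM
      exact huM
  · intro b
    obtain ⟨a, ha⟩ := htref b
    exact ⟨a, (Set.image_mono (f := q) ha).trans (by
      rw [Set.image_preimage_eq _ (Quot.exists_rep · |>.imp fun _ h => h)]  )⟩
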